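/- The function F(x,y) = (1/4)(x² log x + y² log y − (x−y)² log(x−y)) satisfies the WDVV associativity condition for the metric g = 2 dx dy; explicitly, on the domain x,y,x−y > 0, the third-derivative tensors c_{αβγ} = ∂³F/∂z^α∂z^β∂z^γ define an associative multiplication via c_{αβ}^γ = g^{γε}c_{αβε}. -/

import Mathlib

open Finset Filter

/-- Partial derivative operators in the two coordinates `(x,y)`. -/
noncomputable def pd : Fin 2 → (ℝ → ℝ → ℝ) → (ℝ → ℝ → ℝ)
  | 0, F => fun x y => deriv (fun t => F t y) x
  | 1, F => fun x y => deriv (fun t => F x t) y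

/-- The prepotential `F = (1/4)(x² log x + y² log y − (x−y)² log(x−y))`. -/
noncomputable def Fstar : ℝ → ℝ → ℝ := fun x y =>
  (1 / 4) * (x ^ 2 * Real.log x + y ^ 2 * Real.log y
    - (x - y) ^ 2 * Real.log (x - y))

/-- Inverse of the metric `g = 2 dx dy`: `g^{12} = g^{21} = 1`, `g^{11} = g^{22} = 0`. -/
noncomputable def ginv : Fin 2 → Fin 2 → ℝ := fun a b => if a ≠ b then 1 else 0

-- helpers
lemma derivX {G : ℝ → ℝ → ℝ} {g : ℝ → ℝ} {x y d : ℝ}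
    (h : (fun t => G t y) =ᶠ[nhds x] g) (hg : HasDerivAt g d x) : pd 0 G x y = d := by
  show deriv (fun t => G t y) x = d
  rw [h.deriv_eq]; exact hg.deriv

lemma derivY {G : ℝ → ℝ → ℝ} {g : ℝ → ℝ} {x y d : ℝ}
    (h : (fun t => G x t) =ᶠ[nhds y] g) (hg : HasDerivAt g d y) : pd 1 G x y = d := by
  show deriv (fun t => G x t) y = d
  rw [h.deriv_eq]; exact hg.deriv

lemma hdL {t : ℝ} (ht : 0 < t) :
    HasDerivAt (fun s => s ^ 2 * Real.log s) (2 * t * Real.log t + t) t := by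
  have h := (hasDerivAt_pow 2 t).mul (Real.hasDerivAt_log ht.ne')
  refine h.congr_deriv ?_
  field_simp; ring

lemma hdL1 {t : ℝ} (ht : 0 < t) :
    HasDerivAt (fun s => 2 * s * Real.log s + s) (2 * Real.log t + 3) t := by
  have h := (((hasDerivAt_id t).const_mul 2).mul (Real.hasDerivAt_log ht.ne')).add
    (hasDerivAt_id t)
  refine h.congr_deriv ?_
  simp only [id]; field_simp; ring

lemma hdL2 {t : ℝ} (ht : 0 < t) :
    HasDerivAt (fun s => 2 * Real.log s + 3) (2 / t) t := by
  have h := ((Real.hasDerivAt_log ht.ne').const_mul 2).add_const 3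
  exact h.congr_deriv (div_eq_mul_inv _ _)

-- first derivatives
lemma pd0F {x y : ℝ} (hx : 0 < x) (hxy : 0 < x - y) :
    pd 0 Fstar x y
      = (1/4) * ((2*x*Real.log x + x) - (2*(x-y)*Real.log (x-y) + (x-y))) := by
  show deriv (fun t => Fstar t y) x = _
  have h1 : HasDerivAt (fun t : ℝ => (t - y) ^ 2 * Real.log (t - y))
      ((2*(x-y)*Real.log (x-y) + (x-y)) * 1) x :=
    ((hdL hxy).comp x ((hasDerivAt_id' x).sub_const y) :)
  have h : HasDerivAt (fun t => Fstar t y)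
      ((1/4) * ((2*x*Real.log x + x) + 0 - (2*(x-y)*Real.log (x-y) + (x-y)) * 1)) x := by
    exact (((hdL hx).add (hasDerivAt_const x (y ^ 2 * Real.log y))).sub h1).const_mul (1/4)
  rw [h.deriv]; ring

lemma pd1F {x y : ℝ} (hy : 0 < y) (hxy : 0 < x - y) :
    pd 1 Fstar x y
      = (1/4) * ((2*y*Real.log y + y) + (2*(x-y)*Real.log (x-y) + (x-y))) := by
  show deriv (fun t => Fstar x t) y = _
  have h1 : HasDerivAt (fun t : ℝ => (x - t) ^ 2 * Real.log (x - t))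
      ((2*(x-y)*Real.log (x-y) + (x-y)) * (-1)) y :=
    (hdL hxy).comp y ((hasDerivAt_id' y).const_sub x)
  have h : HasDerivAt (fun t => Fstar x t)
      ((1/4) * (0 + (2*y*Real.log y + y) - (2*(x-y)*Real.log (x-y) + (x-y)) * (-1))) y :=
    (((hasDerivAt_const y (x ^ 2 * Real.log x)).add (hdL hy)).sub h1).const_mul (1/4)
  rw [h.deriv]; ring

-- second derivatives
lemma pd00F {x y : ℝ} (hx : 0 < x) (hxy : 0 < x - y) :
    pd 0 (pd 0 Fstar) x y
      = (1/4) * ((2*Real.log x + 3) - (2*Real.log (x-y) + 3)) := by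
  have hyx : y < x := by linarith
  apply derivX (g := fun t => (1/4) * ((2*t*Real.log t + t) - (2*(t-y)*Real.log (t-y) + (t-y))))
  · filter_upwards [eventually_gt_nhds hx, eventually_gt_nhds hyx] with t h1 h2
    exact pd0F h1 (by linarith)
  · have h1 : HasDerivAt (fun t : ℝ => 2*(t-y)*Real.log (t-y) + (t-y))
        ((2*Real.log (x-y) + 3) * 1) x :=
      ((hdL1 hxy).comp x ((hasDerivAt_id' x).sub_const y) :)
    have h := ((hdL1 hx).sub h1).const_mul (1/4)
    refine h.congr_deriv ?_; ring

lemma pd01F {x y : ℝ} (hy : 0 < y) (hxy : 0 < x - y) :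
    pd 0 (pd 1 Fstar) x y = (1/4) * (2*Real.log (x-y) + 3) := by
  have hyx : y < x := by linarith
  apply derivX (g := fun t => (1/4) * ((2*y*Real.log y + y) + (2*(t-y)*Real.log (t-y) + (t-y))))
  · filter_upwards [eventually_gt_nhds hyx] with t h2
    exact pd1F hy (by linarith)
  · have h1 : HasDerivAt (fun t : ℝ => 2*(t-y)*Real.log (t-y) + (t-y))
        ((2*Real.log (x-y) + 3) * 1) x :=
      ((hdL1 hxy).comp x ((hasDerivAt_id' x).sub_const y) :)
    have h := ((hasDerivAt_const x (2*y*Real.log y + y)).add h1).const_mul (1/4)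
    refine h.congr_deriv ?_; ring

lemma pd10F {x y : ℝ} (hx : 0 < x) (hxy : 0 < x - y) :
    pd 1 (pd 0 Fstar) x y = (1/4) * (2*Real.log (x-y) + 3) := by
  have hyx : y < x := by linarith
  apply derivY (g := fun t => (1/4) * ((2*x*Real.log x + x) - (2*(x-t)*Real.log (x-t) + (x-t))))
  · filter_upwards [eventually_lt_nhds hyx] with t h2
    exact pd0F hx (by linarith)
  · have h1 : HasDerivAt (fun t : ℝ => 2*(x-t)*Real.log (x-t) + (x-t))
        ((2*Real.log (x-y) + 3) * (-1)) y :=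
      (hdL1 hxy).comp y ((hasDerivAt_id' y).const_sub x)
    have h := ((hasDerivAt_const y (2*x*Real.log x + x)).sub h1).const_mul (1/4)
    refine h.congr_deriv ?_; ring

lemma pd11F {x y : ℝ} (hy : 0 < y) (hxy : 0 < x - y) :
    pd 1 (pd 1 Fstar) x y
      = (1/4) * ((2*Real.log y + 3) - (2*Real.log (x-y) + 3)) := by
  have hyx : y < x := by linarith
  apply derivY (g := fun t => (1/4) * ((2*t*Real.log t + t) + (2*(x-t)*Real.log (x-t) + (x-t))))
  · filter_upwards [eventually_gt_nhds hy, eventually_lt_nhds hyx] with t h1 h2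
    exact pd1F h1 (by linarith)
  · have h1 : HasDerivAt (fun t : ℝ => 2*(x-t)*Real.log (x-t) + (x-t))
        ((2*Real.log (x-y) + 3) * (-1)) y :=
      (hdL1 hxy).comp y ((hasDerivAt_id' y).const_sub x)
    have h := ((hdL1 hy).add h1).const_mul (1/4)
    refine h.congr_deriv ?_; ring

/-- Third derivative tensor `c_{αβγ} = ∂³F/∂z^α∂z^β∂z^γ`. -/
noncomputable def cLow (α β γ : Fin 2) : ℝ → ℝ → ℝ :=
  pd α (pd β (pd γ Fstar))

/-- Structure constants with an index raised via the metric, `c_{αβ}^γ = g^{γε} c_{αβε}`. -/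
noncomputable def cUp (α β γ : Fin 2) : ℝ → ℝ → ℝ := fun x y =>
  ∑ ε, ginv γ ε * cLow α β ε x y

section third
variable {x y : ℝ} (hx : 0 < x) (hy : 0 < y) (hxy : 0 < x - y)

-- common derivative facts
omit hx hy hxy in
include hxy in
lemma hdXY : HasDerivAt (fun t : ℝ => (1/4) * (2*Real.log (t-y) + 3))
    ((1/4) * (2/(x-y))) x := by
  have h := (((hdL2 hxy).comp x ((hasDerivAt_id' x).sub_const y))).const_mul (1/4)
  refine h.congr_deriv ?_
  simp [Function.comp]

omit hx hy hxy in
include hxy in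
lemma hdYX : HasDerivAt (fun t : ℝ => (1/4) * (2*Real.log (x-t) + 3))
    (-((1/4) * (2/(x-y)))) y := by
  have h := (((hdL2 hxy).comp y ((hasDerivAt_id' y).const_sub x))).const_mul (1/4)
  refine h.congr_deriv ?_
  simp [Function.comp]

include hx hxy in
lemma c000 : cLow 0 0 0 x y = (1/2) * (1/x - 1/(x-y)) := by
  have hyx : y < x := by linarith
  apply derivX (g := fun t => (1/4) * ((2*Real.log t + 3) - (2*Real.log (t-y) + 3)))
  · filter_upwards [eventually_gt_nhds hx, eventually_gt_nhds hyx] with t h1 h2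
    exact pd00F h1 (by linarith)
  · have h1 : HasDerivAt (fun t : ℝ => 2*Real.log (t-y) + 3) (2/(x-y) * 1) x :=
      ((hdL2 hxy).comp x ((hasDerivAt_id' x).sub_const y) :)
    have h := ((hdL2 hx).sub h1).const_mul (1/4)
    refine h.congr_deriv ?_; ring

include hy hxy in
lemma c001 : cLow 0 0 1 x y = 1/(2*(x-y)) := by
  have hyx : y < x := by linarith
  apply derivX (g := fun t => (1/4) * (2*Real.log (t-y) + 3))
  · filter_upwards [eventually_gt_nhds hyx] with t h2
    exact pd01F hy (by linarith)
  · have h := hdXY hxy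
    convert h using 1
    have h1ne : x - y ≠ 0 := hxy.ne'
    have h2ne : x*2 - y*2 ≠ 0 := fun h => hxy.ne' (by linarith)
    field_simp
    ring

include hx hxy in
lemma c010 : cLow 0 1 0 x y = 1/(2*(x-y)) := by
  have hyx : y < x := by linarith
  apply derivX (g := fun t => (1/4) * (2*Real.log (t-y) + 3))
  · filter_upwards [eventually_gt_nhds hx, eventually_gt_nhds hyx] with t h1 h2
    exact pd10F h1 (by linarith)
  · have h := hdXY hxy
    convert h using 1
    have h1ne : x - y ≠ 0 := hxy.ne'
    have h2ne : x*2 - y*2 ≠ 0 := fun h => hxy.ne' (by linarith)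
    field_simp
    ring

include hx hxy in
lemma c100 : cLow 1 0 0 x y = 1/(2*(x-y)) := by
  have hyx : y < x := by linarith
  apply derivY (g := fun t => (1/4) * ((2*Real.log x + 3) - (2*Real.log (x-t) + 3)))
  · filter_upwards [eventually_lt_nhds hyx] with t h2
    exact pd00F hx (by linarith)
  · have h1 : HasDerivAt (fun t : ℝ => 2*Real.log (x-t) + 3) (2/(x-y) * (-1)) y :=
      (hdL2 hxy).comp y ((hasDerivAt_id' y).const_sub x)
    have h := ((hasDerivAt_const y (2*Real.log x + 3)).sub h1).const_mul (1/4)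
    refine h.congr_deriv ?_
    have h1ne : x - y ≠ 0 := hxy.ne'
    have h2ne : x*2 - y*2 ≠ 0 := fun h => hxy.ne' (by linarith)
    field_simp
    ring

include hy hxy in
lemma c011 : cLow 0 1 1 x y = -(1/(2*(x-y))) := by
  have hyx : y < x := by linarith
  apply derivX (g := fun t => (1/4) * ((2*Real.log y + 3) - (2*Real.log (t-y) + 3)))
  · filter_upwards [eventually_gt_nhds hyx] with t h2
    exact pd11F hy (by linarith)
  · have h1 : HasDerivAt (fun t : ℝ => 2*Real.log (t-y) + 3) (2/(x-y) * 1) x :=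
      ((hdL2 hxy).comp x ((hasDerivAt_id' x).sub_const y) :)
    have h := ((hasDerivAt_const x (2*Real.log y + 3)).sub h1).const_mul (1/4)
    refine h.congr_deriv ?_
    have h1ne : x - y ≠ 0 := hxy.ne'
    have h2ne : x*2 - y*2 ≠ 0 := fun h => hxy.ne' (by linarith)
    field_simp
    ring

include hy hxy in
lemma c101 : cLow 1 0 1 x y = -(1/(2*(x-y))) := by
  have hyx : y < x := by linarith
  apply derivY (g := fun t => (1/4) * (2*Real.log (x-t) + 3))
  · filter_upwards [eventually_gt_nhds hy, eventually_lt_nhds hyx] with t h1 h2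
    exact pd01F h1 (by linarith)
  · have h := hdYX hxy
    convert h using 1
    have h1ne : x - y ≠ 0 := hxy.ne'
    have h2ne : x*2 - y*2 ≠ 0 := fun h => hxy.ne' (by linarith)
    field_simp
    ring

include hx hxy in
lemma c110 : cLow 1 1 0 x y = -(1/(2*(x-y))) := by
  have hyx : y < x := by linarith
  apply derivY (g := fun t => (1/4) * (2*Real.log (x-t) + 3))
  · filter_upwards [eventually_lt_nhds hyx] with t h2
    exact pd10F hx (by linarith)
  · have h := hdYX hxy
    convert h using 1
    have h1ne : x - y ≠ 0 := hxy.ne'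
    have h2ne : x*2 - y*2 ≠ 0 := fun h => hxy.ne' (by linarith)
    field_simp
    ring

include hy hxy in
lemma c111 : cLow 1 1 1 x y = (1/2) * (1/y + 1/(x-y)) := by
  have hyx : y < x := by linarith
  apply derivY (g := fun t => (1/4) * ((2*Real.log t + 3) - (2*Real.log (x-t) + 3)))
  · filter_upwards [eventually_gt_nhds hy, eventually_lt_nhds hyx] with t h1 h2
    exact pd11F h1 (by linarith)
  · have h1 : HasDerivAt (fun t : ℝ => 2*Real.log (x-t) + 3) (2/(x-y) * (-1)) y :=
      (hdL2 hxy).comp y ((hasDerivAt_id' y).const_sub x)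
    have h := ((hdL2 hy).sub h1).const_mul (1/4)
    refine h.congr_deriv ?_; ring

end third



/-- `F = (1/4)(x² log x + y² log y − (x−y)² log(x−y))` satisfies the WDVV
associativity condition for the metric `g = 2 dx dy` on `x, y, x − y > 0`:
the multiplication defined by `c_{αβ}^γ = g^{γε}c_{αβε}` is associative. -/
theorem WDVV_A1_example (x y : ℝ) (hx : 0 < x) (hy : 0 < y) (hxy : 0 < x - y)
    (α β γ δ : Fin 2) :
    ∑ ε, cUp α β ε x y * cUp ε γ δ x y
      = ∑ ε, cUp α γ ε x y * cUp ε β δ x y := by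
  have hx' : x ≠ 0 := hx.ne'
  have hy' : y ≠ 0 := hy.ne'
  have hxy' : x - y ≠ 0 := hxy.ne'
  fin_cases α <;> fin_cases β <;> fin_cases γ <;> fin_cases δ <;>
    simp [cUp, ginv, Fin.sum_univ_two,
      c000 hx hxy, c001 hy hxy, c010 hx hxy, c100 hx hxy, c011 hy hxy, c101 hy hxy,
      c110 hx hxy, c111 hy hxy] <;>
  · field_simp
    ring
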